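/- Strong duality for the chi-square uncertainty set: Let S be a finite nonempty set, p a pmf on S, v : S → ℝ with v(s) ≥ 0 for all s, and σ ≥ 0. Then inf{ E_q[v] : q a pmf on S with q(s) = 0 whenever p(s) = 0 and ρ_{χ²}(q,p) ≤ σ } = sup_{α ≥ 0} { E_p[(v)_α] − sqrt( σ · Var_p[(v)_α] ) }. -/

import Mathlib

open Finset

/-- `p` is a probability mass function on the finite nonempty type `S`. -/
def IsPmf {S : Type*} [Fintype S] (p : S → ℝ) : Prop :=
  (∀ s, 0 ≤ p s) ∧ ∑ s, p s = 1

lemma sum_filter_pos_eq {S : Type*} [Fintype S] (p f : S → ℝ) (hp0 : ∀ s, 0 ≤ p s)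
    (hf : ∀ s, p s = 0 → f s = 0) :
    ∑ s ∈ Finset.univ.filter (fun s => 0 < p s), f s = ∑ s, f s := by
  apply Finset.sum_subset (filter_subset _ _)
  intro s _ hs
  simp only [mem_filter, mem_univ, true_and, not_lt] at hs
  exact hf s (le_antisymm hs (hp0 s))

lemma sum_sq_dev {S : Type*} [Fintype S] (p f : S → ℝ) (hp1 : ∑ s, p s = 1) :
    ∑ s, p s * (f s - ∑ t, p t * f t) ^ 2
      = ∑ s, p s * f s ^ 2 - (∑ s, p s * f s) ^ 2 := by
  set μ := ∑ t, p t * f t with hμ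
  have : ∀ s ∈ Finset.univ, p s * (f s - μ) ^ 2
      = p s * f s ^ 2 - 2 * μ * (p s * f s) + μ ^ 2 * p s := fun s _ => by ring
  rw [Finset.sum_congr rfl this]
  rw [Finset.sum_add_distrib, Finset.sum_sub_distrib, ← Finset.mul_sum, ← Finset.mul_sum,
    hp1, ← hμ]
  ring

lemma weak_duality {S : Type*} [Fintype S] (p q v : S → ℝ) (hp : IsPmf p) (hq : IsPmf q)
    (habs : ∀ s, p s = 0 → q s = 0) (σ : ℝ) (hσ : 0 ≤ σ)
    (hchi : (∑ s ∈ Finset.univ.filter (fun s => 0 < p s), (q s - p s) ^ 2 / p s) ≤ σ)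
    (α : ℝ) :
    (∑ s, p s * min (v s) α)
      - Real.sqrt (σ * ((∑ s, p s * (min (v s) α) ^ 2)
          - (∑ s, p s * min (v s) α) ^ 2)) ≤ ∑ s, q s * v s := by
  obtain ⟨hp0, hp1⟩ := hp
  obtain ⟨hq0, hq1⟩ := hq
  set u := fun s => min (v s) α with hu
  set μ := ∑ s, p s * u s with hμ
  set D := ∑ s, p s * u s ^ 2 - μ ^ 2 with hD
  have hDdev : D = ∑ s, p s * (u s - μ) ^ 2 := (sum_sq_dev p u hp1).symm
  have hD0 : 0 ≤ D := by
    rw [hDdev]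
    exact Finset.sum_nonneg fun s _ => mul_nonneg (hp0 s) (sq_nonneg _)
  have step1 : ∑ s, q s * u s ≤ ∑ s, q s * v s :=
    Finset.sum_le_sum fun s _ => mul_le_mul_of_nonneg_left (min_le_left _ _) (hq0 s)
  set F := Finset.univ.filter (fun s : S => 0 < p s) with hF
  have step2 : ∑ s ∈ F, (q s - p s) * (u s - μ) = (∑ s, q s * u s) - μ := by
    rw [sum_filter_pos_eq p _ hp0 (fun s hs => by rw [habs s hs, hs]; ring)]
    have : ∀ s ∈ Finset.univ, (q s - p s) * (u s - μ)
        = q s * u s - p s * u s - μ * q s + μ * p s := fun s _ => by ring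
    rw [Finset.sum_congr rfl this, Finset.sum_add_distrib, Finset.sum_sub_distrib,
      Finset.sum_sub_distrib, ← Finset.mul_sum, ← Finset.mul_sum, hq1, hp1, ← hμ]
    ring
  -- Cauchy-Schwarz
  have hFsq : ∑ s ∈ F, Real.sqrt (p s) ^ 2 * (u s - μ) ^ 2 ≤ D := by
    rw [hDdev, ← sum_filter_pos_eq p (fun s => p s * (u s - μ) ^ 2) hp0
      (fun s hs => by show p s * (u s - μ) ^ 2 = 0; rw [hs]; ring)]
    apply le_of_eq
    apply Finset.sum_congr rfl
    intro s hs
    simp only [hF, mem_filter] at hs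
    rw [Real.sq_sqrt (hp0 s)]
  have cs : (∑ s ∈ F, (q s - p s) * (u s - μ)) ^ 2 ≤ σ * D := by
    have key : ∀ s ∈ F, (q s - p s) * (u s - μ)
        = ((q s - p s) / Real.sqrt (p s)) * (Real.sqrt (p s) * (u s - μ)) := by
      intro s hs
      simp only [hF, mem_filter, mem_univ, true_and] at hs
      have : Real.sqrt (p s) ≠ 0 := by positivity
      field_simp
    rw [Finset.sum_congr rfl key]
    calc (∑ s ∈ F, ((q s - p s) / Real.sqrt (p s)) * (Real.sqrt (p s) * (u s - μ))) ^ 2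
        ≤ (∑ s ∈ F, ((q s - p s) / Real.sqrt (p s)) ^ 2)
          * (∑ s ∈ F, (Real.sqrt (p s) * (u s - μ)) ^ 2) :=
          Finset.sum_mul_sq_le_sq_mul_sq F _ _
      _ ≤ σ * D := by
          apply mul_le_mul
          · refine le_trans (le_of_eq ?_) hchi
            apply Finset.sum_congr rfl
            intro s hs
            simp only [hF, mem_filter, mem_univ, true_and] at hs
            rw [div_pow, Real.sq_sqrt (hp0 s)]
          · refine le_trans (le_of_eq ?_) hFsq
            apply Finset.sum_congr rfl
            intro s _
            rw [mul_pow]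
          · exact Finset.sum_nonneg fun s _ => sq_nonneg _
          · exact hσ
  have habs2 : |∑ s ∈ F, (q s - p s) * (u s - μ)| ≤ Real.sqrt (σ * D) := by
    rw [← Real.sqrt_sq_eq_abs]
    exact Real.sqrt_le_sqrt cs
  have h1 : -Real.sqrt (σ * D) ≤ ∑ s ∈ F, (q s - p s) * (u s - μ) :=
    le_trans (neg_le_neg habs2) (neg_abs_le _)
  have hfin : μ - Real.sqrt (σ * D) ≤ ∑ s, q s * u s := by linarith [step2]
  exact le_trans hfin step1

lemma min_eq_sub_max (a b : ℝ) : min a b = b - max (b - a) 0 := by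
  rcases le_total a b with h | h
  · rw [min_eq_left h, max_eq_left (by linarith)]; ring
  · rw [min_eq_right h, max_eq_right (by linarith)]; ring

lemma dual_val {S : Type*} [Fintype S] (p v : S → ℝ) (hp1 : ∑ s, p s = 1) (σ α : ℝ) :
    (∑ s, p s * min (v s) α)
      - Real.sqrt (σ * ((∑ s, p s * (min (v s) α) ^ 2)
          - (∑ s, p s * min (v s) α) ^ 2))
    = (α - ∑ s, p s * max (α - v s) 0)
      - Real.sqrt (σ * ((∑ s, p s * (max (α - v s) 0) ^ 2)
          - (∑ s, p s * max (α - v s) 0) ^ 2)) := by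
  set m := ∑ s, p s * max (α - v s) 0 with hm
  set M := ∑ s, p s * (max (α - v s) 0) ^ 2 with hM
  have h1 : ∑ s, p s * min (v s) α = α - m := by
    have : ∀ s ∈ Finset.univ, p s * min (v s) α
        = α * p s - p s * max (α - v s) 0 := fun s _ => by
      rw [min_eq_sub_max]; ring
    rw [Finset.sum_congr rfl this, Finset.sum_sub_distrib, ← Finset.mul_sum, hp1, hm]
    ring
  have h2 : ∑ s, p s * (min (v s) α) ^ 2 = α ^ 2 - 2 * α * m + M := by
    have : ∀ s ∈ Finset.univ, p s * (min (v s) α) ^ 2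
        = α ^ 2 * p s - 2 * α * (p s * max (α - v s) 0)
          + p s * (max (α - v s) 0) ^ 2 := fun s _ => by
      rw [min_eq_sub_max]; ring
    rw [Finset.sum_congr rfl this, Finset.sum_add_distrib, Finset.sum_sub_distrib,
      ← Finset.mul_sum, ← Finset.mul_sum, hp1, ← hm, ← hM]
    ring
  rw [h1, h2]
  congr 2
  ring

lemma primal_mem {S : Type*} [Fintype S] (p v : S → ℝ) (hp : IsPmf p)
    (σ α : ℝ)
    (hm : 0 < ∑ s, p s * max (α - v s) 0)
    (hfeas : (∑ s, p s * (max (α - v s) 0) ^ 2) - (∑ s, p s * max (α - v s) 0) ^ 2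
        ≤ σ * (∑ s, p s * max (α - v s) 0) ^ 2) :
    (α - (∑ s, p s * (max (α - v s) 0) ^ 2) / (∑ s, p s * max (α - v s) 0))
      ∈ {x : ℝ | ∃ q : S → ℝ, IsPmf q ∧
        (∀ s, p s = 0 → q s = 0) ∧
        (∑ s ∈ Finset.univ.filter (fun s => 0 < p s), (q s - p s) ^ 2 / p s) ≤ σ ∧
        x = ∑ s, q s * v s} := by
  obtain ⟨hp0, hp1⟩ := hp
  set w := fun s => max (α - v s) 0 with hw
  set m := ∑ s, p s * w s with hm'
  set M := ∑ s, p s * w s ^ 2 with hM'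
  set q := fun s => p s * w s / m with hq
  have hq0 : ∀ s, 0 ≤ q s := fun s =>
    div_nonneg (mul_nonneg (hp0 s) (le_max_right _ _)) hm.le
  have hq1 : ∑ s, q s = 1 := by
    rw [hq]
    simp only
    rw [← Finset.sum_div, ← hm', div_self hm.ne']
  have habs : ∀ s, p s = 0 → q s = 0 := by
    intro s hs
    show p s * w s / m = 0
    rw [hs]; simp
  have hchi : (∑ s ∈ Finset.univ.filter (fun s => 0 < p s), (q s - p s) ^ 2 / p s) ≤ σ := by
    have hterm : ∀ s ∈ Finset.univ.filter (fun s : S => 0 < p s),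
        (q s - p s) ^ 2 / p s = p s * (w s - m) ^ 2 / m ^ 2 := by
      intro s hs
      simp only [mem_filter, mem_univ, true_and] at hs
      show (p s * w s / m - p s) ^ 2 / p s = _
      field_simp
    rw [Finset.sum_congr rfl hterm]
    have : ∑ s ∈ Finset.univ.filter (fun s : S => 0 < p s), p s * (w s - m) ^ 2 / m ^ 2
        = (M - m ^ 2) / m ^ 2 := by
      rw [← Finset.sum_div]
      congr 1
      rw [sum_filter_pos_eq p (fun s => p s * (w s - m) ^ 2) hp0
        (fun s hs => by show p s * (w s - m) ^ 2 = 0; rw [hs]; ring), hm']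
      exact sum_sq_dev p w hp1
    rw [this, div_le_iff₀ (by positivity)]
    linarith [hfeas]
  refine ⟨q, ⟨hq0, hq1⟩, habs, hchi, ?_⟩
  have hval : ∑ s, q s * v s = (α * m - M) / m := by
    have : ∀ s ∈ Finset.univ, q s * v s = (p s * w s * v s) / m := fun s _ => by
      show (p s * w s / m) * v s = _; ring
    rw [Finset.sum_congr rfl this, ← Finset.sum_div]
    congr 1
    have hpt : ∀ s ∈ Finset.univ, p s * w s * v s
        = α * (p s * w s) - p s * w s ^ 2 := by
      intro s _
      have : w s * v s = w s * (α - w s) := by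
        rcases le_total (v s) α with h | h
        · have hws : w s = α - v s := by
            show max (α - v s) 0 = α - v s; exact max_eq_left (by linarith)
          rw [hws]; ring
        · have hws : w s = 0 := by
            show max (α - v s) 0 = 0; exact max_eq_right (by linarith)
          rw [hws]; ring
      calc p s * w s * v s = p s * (w s * v s) := by ring
        _ = p s * (w s * (α - w s)) := by rw [this]
        _ = α * (p s * w s) - p s * w s ^ 2 := by ring
    rw [Finset.sum_congr rfl hpt, Finset.sum_sub_distrib, ← Finset.mul_sum, ← hm', ← hM']
  rw [hval]
  field_simp

set_option maxHeartbeats 1600000 in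
/-- Strong duality for the chi-square uncertainty set. -/
theorem chisq_strong_duality
    {S : Type*} [Fintype S] [Nonempty S]
    (p : S → ℝ) (hp : IsPmf p)
    (v : S → ℝ) (hv : ∀ s, 0 ≤ v s)
    (σ : ℝ) (hσ : 0 ≤ σ) :
    sInf {x : ℝ | ∃ q : S → ℝ, IsPmf q ∧
        (∀ s, p s = 0 → q s = 0) ∧
        (∑ s ∈ Finset.univ.filter (fun s => 0 < p s), (q s - p s) ^ 2 / p s) ≤ σ ∧
        x = ∑ s, q s * v s}
      =
    sSup {x : ℝ | ∃ α : ℝ, 0 ≤ α ∧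
        x = (∑ s, p s * min (v s) α)
          - Real.sqrt (σ * ((∑ s, p s * (min (v s) α) ^ 2)
              - (∑ s, p s * min (v s) α) ^ 2))} := by
  classical
  obtain ⟨hp0, hp1⟩ := hp
  set A := {x : ℝ | ∃ q : S → ℝ, IsPmf q ∧
        (∀ s, p s = 0 → q s = 0) ∧
        (∑ s ∈ Finset.univ.filter (fun s => 0 < p s), (q s - p s) ^ 2 / p s) ≤ σ ∧
        x = ∑ s, q s * v s} with hA
  set B := {x : ℝ | ∃ α : ℝ, 0 ≤ α ∧
        x = (∑ s, p s * min (v s) α)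
          - Real.sqrt (σ * ((∑ s, p s * (min (v s) α) ^ 2)
              - (∑ s, p s * min (v s) α) ^ 2))} with hB
  have hpA : (∑ s, p s * v s) ∈ A := ⟨p, ⟨hp0, hp1⟩, fun _ h => h, by simpa using hσ, rfl⟩
  have weak : ∀ x ∈ B, ∀ y ∈ A, x ≤ y := by
    rintro x ⟨α, _, rfl⟩ y ⟨q, hq, habs, hchi, rfl⟩
    exact weak_duality p q v ⟨hp0, hp1⟩ hq habs σ hσ hchi α
  have hAne : A.Nonempty := ⟨_, hpA⟩
  have hBne : B.Nonempty := by
    refine ⟨0, 0, le_refl 0, ?_⟩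
    have hmin : ∀ s, min (v s) 0 = 0 := fun s => min_eq_right (hv s)
    simp [hmin]
  have hAbb : BddBelow A := by
    refine ⟨0, ?_⟩
    rintro x ⟨q, hq, _, _, rfl⟩
    exact Finset.sum_nonneg fun s _ => mul_nonneg (hq.1 s) (hv s)
  have hBba : BddAbove B := ⟨∑ s, p s * v s, fun x hx => weak x hx _ hpA⟩
  refine le_antisymm ?_ (csSup_le hBne fun x hx => le_csInf hAne fun y hy => weak x hx y hy)
  rcases eq_or_lt_of_le hσ with hσ0 | hσpos
  · -- σ = 0
    have hBmem : (∑ s, p s * v s) ∈ B := by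
      refine ⟨Finset.univ.sup' Finset.univ_nonempty v,
        le_trans (hv (Classical.arbitrary S)) (Finset.le_sup' v (mem_univ _)), ?_⟩
      have hmin : ∀ s, min (v s) (Finset.univ.sup' Finset.univ_nonempty v) = v s :=
        fun s => min_eq_left (Finset.le_sup' v (mem_univ s))
      simp [hmin, ← hσ0]
    exact le_trans (csInf_le hAbb hpA) (le_csSup hBba hBmem)
  · -- σ > 0
    have hFne : (Finset.univ.filter (fun s : S => 0 < p s)).Nonempty := by
      by_contra h
      have hall : ∀ s, p s = 0 := by
        intro s
        by_contra hps
        exact h ⟨s, mem_filter.2 ⟨mem_univ s, lt_of_le_of_ne (hp0 s) (Ne.symm hps)⟩⟩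
      rw [Finset.sum_congr rfl (fun s _ => hall s)] at hp1
      simp at hp1
    set vmin := (Finset.univ.filter (fun s : S => 0 < p s)).inf' hFne v with hvmin
    obtain ⟨s0, hs0F, hs0⟩ := Finset.exists_mem_eq_inf' hFne v
    have hs0p : 0 < p s0 := (mem_filter.1 hs0F).2
    have hvm0 : 0 ≤ vmin := by rw [hvmin, hs0]; exact hv s0
    have hvmle : ∀ s, 0 < p s → vmin ≤ v s := fun s hs =>
      Finset.inf'_le v (mem_filter.2 ⟨mem_univ s, hs⟩)
    set T := (Finset.univ.filter (fun s : S => 0 < p s)).filter (fun s => v s ≠ vmin)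
      with hT
    set a := if hTne : T.Nonempty then T.inf' hTne v else vmin + 1 with ha
    have havm : vmin < a := by
      rw [ha]; split_ifs with hTne
      · obtain ⟨t, htT, hteq⟩ := Finset.exists_mem_eq_inf' hTne v
        rw [hteq]
        obtain ⟨htF, htne⟩ := mem_filter.1 htT
        exact lt_of_le_of_ne (hvmle t (mem_filter.1 htF).2) (Ne.symm htne)
      · linarith
    have hav : ∀ s, 0 < p s → v s ≠ vmin → a ≤ v s := by
      intro s hs hne
      have hsT : s ∈ T := mem_filter.2 ⟨mem_filter.2 ⟨mem_univ s, hs⟩, hne⟩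
      rw [ha, dif_pos ⟨s, hsT⟩]
      exact Finset.inf'_le v hsT
    set p0 := ∑ s, (if v s = vmin ∧ 0 < p s then p s else 0) with hp0def
    have hp0pos : 0 < p0 := by
      have hvs0 : v s0 = vmin := by rw [hvmin, hs0]
      have h1 : (if v s0 = vmin ∧ 0 < p s0 then p s0 else 0) ≤ p0 := by
        rw [hp0def]
        exact Finset.single_le_sum
          (f := fun s => if v s = vmin ∧ 0 < p s then p s else 0)
          (fun s _ => by split_ifs with h; exacts [hp0 s, le_refl 0]) (mem_univ s0)
      rw [if_pos ⟨hvs0, hs0p⟩] at h1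
      linarith
    have hp0le : p0 ≤ 1 := by
      rw [hp0def, ← hp1]
      exact Finset.sum_le_sum fun s _ => by split_ifs with h; exacts [le_refl _, hp0 s]
    have hma : ∑ s, p s * max (a - v s) 0 = (a - vmin) * p0 := by
      rw [hp0def, Finset.mul_sum]
      apply Finset.sum_congr rfl
      intro s _
      by_cases hps : 0 < p s
      · by_cases hvs : v s = vmin
        · rw [if_pos ⟨hvs, hps⟩, hvs, max_eq_left (by linarith)]; ring
        · rw [if_neg (fun hh => hvs hh.1), max_eq_right (by linarith [hav s hps hvs])]; ring
      · have h0 : p s = 0 := le_antisymm (not_lt.1 hps) (hp0 s)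
        rw [h0]; simp
    have hMa : ∑ s, p s * (max (a - v s) 0) ^ 2 = (a - vmin) ^ 2 * p0 := by
      rw [hp0def, Finset.mul_sum]
      apply Finset.sum_congr rfl
      intro s _
      by_cases hps : 0 < p s
      · by_cases hvs : v s = vmin
        · rw [if_pos ⟨hvs, hps⟩, hvs, max_eq_left (by linarith)]; ring
        · rw [if_neg (fun hh => hvs hh.1), max_eq_right (by linarith [hav s hps hvs])]; ring
      · have h0 : p s = 0 := le_antisymm (not_lt.1 hps) (hp0 s)
        rw [h0]; simp
    by_cases hcase : 1 - p0 ≤ σ * p0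
    · -- big σ case
      have hmpos : 0 < ∑ s, p s * max (a - v s) 0 := by
        rw [hma]; exact mul_pos (by linarith) hp0pos
      have hfeas : (∑ s, p s * (max (a - v s) 0) ^ 2) - (∑ s, p s * max (a - v s) 0) ^ 2
          ≤ σ * (∑ s, p s * max (a - v s) 0) ^ 2 := by
        rw [hma, hMa]
        have key : (1 - p0) * ((a - vmin) ^ 2 * p0) ≤ (σ * p0) * ((a - vmin) ^ 2 * p0) :=
          mul_le_mul_of_nonneg_right hcase (by positivity)
        nlinarith [key]
      have hAmem := primal_mem p v ⟨hp0, hp1⟩ σ a hmpos hfeas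
      have hval : a - (∑ s, p s * (max (a - v s) 0) ^ 2) / (∑ s, p s * max (a - v s) 0)
          = vmin := by
        rw [hma, hMa]
        rw [hma] at hmpos
        field_simp
        ring
      rw [hval] at hAmem
      have hBmem : vmin ∈ B := by
        refine ⟨vmin, hvm0, ?_⟩
        rw [dual_val p v hp1 σ vmin]
        have hmvm : ∑ s, p s * max (vmin - v s) 0 = 0 := by
          apply Finset.sum_eq_zero
          intro s _
          by_cases hps : 0 < p s
          · rw [max_eq_right (by linarith [hvmle s hps])]; ring
          · rw [le_antisymm (not_lt.1 hps) (hp0 s)]; ring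
        have hMvm : ∑ s, p s * (max (vmin - v s) 0) ^ 2 = 0 := by
          apply Finset.sum_eq_zero
          intro s _
          by_cases hps : 0 < p s
          · rw [max_eq_right (by linarith [hvmle s hps])]; ring
          · rw [le_antisymm (not_lt.1 hps) (hp0 s)]; ring
        rw [hmvm, hMvm]
        simp
      exact le_trans (csInf_le hAbb hAmem) (le_csSup hBba hBmem)
    · -- small σ case: intermediate value theorem
      rw [not_le] at hcase
      set c := ∑ s, p s * v s with hc
      have hc0 : 0 ≤ c := Finset.sum_nonneg fun s _ => mul_nonneg (hp0 s) (hv s)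
      have ha0 : 0 ≤ a := by linarith
      set b := a + c + 1 + (2 * c + c ^ 2 + 1) / σ with hb
      have hdiv0 : 0 ≤ (2 * c + c ^ 2 + 1) / σ := by positivity
      have hab : a ≤ b := by rw [hb]; linarith
      have hb0 : 0 ≤ b := le_trans ha0 hab
      set H := fun α : ℝ => (∑ s, p s * (max (α - v s) 0) ^ 2)
        - (1 + σ) * (∑ s, p s * max (α - v s) 0) ^ 2 with hHdef
      have c1 : Continuous fun α : ℝ => ∑ s, p s * max (α - v s) 0 :=
        continuous_finset_sum _ fun s _ =>
          continuous_const.mul ((continuous_id.sub continuous_const).max continuous_const)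
      have c2 : Continuous fun α : ℝ => ∑ s, p s * (max (α - v s) 0) ^ 2 :=
        continuous_finset_sum _ fun s _ =>
          continuous_const.mul (((continuous_id.sub continuous_const).max continuous_const).pow 2)
      have hcont : Continuous H := c2.sub (continuous_const.mul (c1.pow 2))
      have hHa : 0 < H a := by
        have hexp : H a = (a - vmin) ^ 2 * p0 * (1 - (1 + σ) * p0) := by
          simp only [hHdef]
          rw [hma, hMa]
          ring
        rw [hexp]
        exact mul_pos (mul_pos (pow_pos (by linarith) 2) hp0pos) (by linarith)
      have hHb : H b < 0 := by
        have hMb : (∑ s, p s * (max (b - v s) 0) ^ 2) ≤ b ^ 2 := by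
          have hle : ∀ s, max (b - v s) 0 ≤ b := fun s => max_le (by linarith [hv s]) hb0
          calc (∑ s, p s * (max (b - v s) 0) ^ 2)
              ≤ ∑ s, p s * b ^ 2 := Finset.sum_le_sum fun s _ =>
                mul_le_mul_of_nonneg_left
                  (pow_le_pow_left₀ (le_max_right _ _) (hle s) 2) (hp0 s)
            _ = b ^ 2 := by rw [← Finset.sum_mul, hp1, one_mul]
        have hmb : b - c ≤ ∑ s, p s * max (b - v s) 0 := by
          have hexp : ∑ s, p s * (b - v s) = b - c := by
            have : ∀ s ∈ Finset.univ, p s * (b - v s) = b * p s - p s * v s :=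
              fun s _ => by ring
            rw [Finset.sum_congr rfl this, Finset.sum_sub_distrib, ← Finset.mul_sum,
              hp1, ← hc]
            ring
          rw [← hexp]
          exact Finset.sum_le_sum fun s _ =>
            mul_le_mul_of_nonneg_left (le_max_left _ _) (hp0 s)
        have ht1 : 1 ≤ b - c := by rw [hb]; linarith
        have ht0 : (0:ℝ) ≤ b - c := by linarith
        have hσt : 2 * c + c ^ 2 + 1 ≤ σ * (b - c) := by
          have h1 : b - c = a + 1 + (2 * c + c ^ 2 + 1) / σ := by rw [hb]; ring
          rw [h1, mul_add, mul_div_cancel₀ _ hσpos.ne']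
          nlinarith [mul_nonneg hσpos.le (show (0:ℝ) ≤ a + 1 by linarith)]
        have hsq : (b - c) ^ 2 ≤ (∑ s, p s * max (b - v s) 0) ^ 2 :=
          pow_le_pow_left₀ ht0 hmb 2
        have hkey : σ * (b - c) * (b - c) ≥ (2 * c + c ^ 2 + 1) * (b - c) :=
          mul_le_mul_of_nonneg_right hσt ht0
        simp only [hHdef]
        nlinarith [hMb, hsq, mul_nonneg (sq_nonneg c) (sub_nonneg.2 ht1)]
      obtain ⟨α, hαmem, hαroot⟩ := intermediate_value_Icc' hab hcont.continuousOn
        ⟨hHb.le, hHa.le⟩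
      have hαa : a ≤ α := hαmem.1
      have hα0 : 0 ≤ α := le_trans ha0 hαa
      have hmα : 0 < ∑ s, p s * max (α - v s) 0 := by
        have hmono : (∑ s, p s * max (a - v s) 0) ≤ ∑ s, p s * max (α - v s) 0 :=
          Finset.sum_le_sum fun s _ =>
            mul_le_mul_of_nonneg_left (max_le_max (by linarith) le_rfl) (hp0 s)
        have : 0 < ∑ s, p s * max (a - v s) 0 := by
          rw [hma]; exact mul_pos (by linarith) hp0pos
        linarith
      have hroot : (∑ s, p s * (max (α - v s) 0) ^ 2)
          = (1 + σ) * (∑ s, p s * max (α - v s) 0) ^ 2 := by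
        simp only [hHdef] at hαroot
        linarith
      have hfeas : (∑ s, p s * (max (α - v s) 0) ^ 2) - (∑ s, p s * max (α - v s) 0) ^ 2
          ≤ σ * (∑ s, p s * max (α - v s) 0) ^ 2 := by
        rw [hroot]; ring_nf; exact le_refl _
      have hAmem := primal_mem p v ⟨hp0, hp1⟩ σ α hmα hfeas
      have hval : α - (∑ s, p s * (max (α - v s) 0) ^ 2) / (∑ s, p s * max (α - v s) 0)
          = α - (∑ s, p s * max (α - v s) 0) - σ * (∑ s, p s * max (α - v s) 0) := by
        rw [hroot]
        field_simp
        ring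
      rw [hval] at hAmem
      have hBmem : (α - (∑ s, p s * max (α - v s) 0)
          - σ * (∑ s, p s * max (α - v s) 0)) ∈ B := by
        refine ⟨α, hα0, ?_⟩
        rw [dual_val p v hp1 σ α]
        have h2 : σ * ((∑ s, p s * (max (α - v s) 0) ^ 2)
            - (∑ s, p s * max (α - v s) 0) ^ 2)
            = (σ * (∑ s, p s * max (α - v s) 0)) ^ 2 := by
          rw [hroot]; ring
        rw [h2, Real.sqrt_sq (mul_nonneg hσpos.le hmα.le)]
      exact le_trans (csInf_le hAbb hAmem) (le_csSup hBba hBmem)
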